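/- For q = 1, a set S is an A(n,1,w,t) design if and only if the family of complements of the supports of codewords of S forms a Steiner system S(n−w, n−t, n). -/
import Mathlib


/-- Weight of a word over `Option α`: number of non-star (non-`none`) positions. -/
def wt {n : ℕ} {α : Type*} (u : Fin n → Option α) : ℕ :=
  (Finset.univ.filter fun i => ((u i).isSome : Prop)).card

/-- `SubFace v u` : the face of `v` is contained in the face of `u`, i.e. `v` agrees with `u`
on all non-star positions of `u`. -/
def SubFace {n : ℕ} {α : Type*} (v u : Fin n → Option α) : Prop :=
  ∀ i, ((u i).isSome : Prop) → v i = u i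

/-- `H(n,q,w,t)` design over alphabet `α` (with `q = #α`): a set of weight-`w` words such that
every weight-`t` word contains exactly one of them. -/
def IsH (n w t : ℕ) (α : Type*) (S : Set (Fin n → Option α)) : Prop :=
  (∀ s ∈ S, wt s = w) ∧
  ∀ u : Fin n → Option α, wt u = t → ∃! s, s ∈ S ∧ SubFace s u

/-- `A(n,q,w,t)` design over alphabet `α`: a set of weight-`t` words such that every
weight-`w` word is contained in exactly one of them. -/
def IsA (n w t : ℕ) (α : Type*) (S : Set (Fin n → Option α)) : Prop :=
  (∀ s ∈ S, wt s = t) ∧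
  ∀ v : Fin n → Option α, wt v = w → ∃! s, s ∈ S ∧ SubFace v s

/-- Steiner system `S(t,w,n)`: a family of `w`-subsets of `Fin n` such that every `t`-subset
is contained in exactly one block. -/
def IsSteiner (t w n : ℕ) (B : Set (Finset (Fin n))) : Prop :=
  (∀ b ∈ B, b.card = w) ∧ ∀ T : Finset (Fin n), T.card = t → ∃! b, b ∈ B ∧ T ⊆ b

/-- support of a word -/
private def fsupp {n : ℕ} (u : Fin n → Option (Fin 1)) : Finset (Fin n) :=
  Finset.univ.filter fun i => ((u i).isSome : Prop)

private lemma subface_iff {n : ℕ} (v u : Fin n → Option (Fin 1)) :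
    SubFace v u ↔ fsupp u ⊆ fsupp v := by
  constructor
  · intro h i hi
    simp only [fsupp, Finset.mem_filter, Finset.mem_univ, true_and] at hi ⊢
    rw [h i hi]; exact hi
  · intro h i hi
    have hv : (v i).isSome := by
      have := h (Finset.mem_filter.2 ⟨Finset.mem_univ i, hi⟩)
      simpa [fsupp] using this
    obtain ⟨a, ha⟩ := Option.isSome_iff_exists.1 hv
    obtain ⟨b, hb⟩ := Option.isSome_iff_exists.1 hi
    rw [ha, hb]; exact congrArg some (Subsingleton.elim a b)

private lemma eq_of_fsupp_eq {n : ℕ} {u v : Fin n → Option (Fin 1)}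
    (h : fsupp u = fsupp v) : u = v := by
  funext i
  have hi : (u i).isSome ↔ (v i).isSome := by
    have := Finset.ext_iff.1 h i
    simpa [fsupp] using this
  cases hu : u i with
  | none =>
    cases hv : v i with
    | none => rfl
    | some b => rw [hu, hv] at hi; simp at hi
  | some a =>
    cases hv : v i with
    | none => rw [hu, hv] at hi; simp at hi
    | some b => exact congrArg some (Subsingleton.elim a b)

private lemma fsupp_indicator {n : ℕ} (A : Finset (Fin n)) :
    fsupp (fun i => if i ∈ A then some (0 : Fin 1) else none) = A := by
  ext i; simp [fsupp, apply_ite Option.isSome]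

private lemma card_compl_fsupp {n : ℕ} (u : Fin n → Option (Fin 1)) :
    (fsupp u)ᶜ.card = n - wt u := by
  rw [Finset.card_compl, Fintype.card_fin]; rfl

private lemma wt_le {n : ℕ} (u : Fin n → Option (Fin 1)) : wt u ≤ n := by
  have := Finset.card_filter_le (Finset.univ : Finset (Fin n)) (fun i => ((u i).isSome : Prop))
  simpa [wt] using this

theorem A_design_q1_iff_Steiner (n w t : ℕ) (hwn : w ≤ n) (htw : t ≤ w) (ht : 1 ≤ t)
    (S : Set (Fin n → Option (Fin 1))) :
    IsA n w t (Fin 1) S ↔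
      IsSteiner (n - w) (n - t) n
        ((fun s : Fin n → Option (Fin 1) =>
            (Finset.univ.filter fun i => ((s i).isSome : Prop))ᶜ) '' S) := by
  have htn : t ≤ n := le_trans htw hwn
  constructor
  · rintro ⟨hcard, hcov⟩
    constructor
    · rintro b ⟨s, hs, rfl⟩
      show (fsupp s)ᶜ.card = n - t
      rw [card_compl_fsupp, hcard s hs]
    · intro T hT
      set v : Fin n → Option (Fin 1) := fun i => if i ∈ Tᶜ then some 0 else none with hv
      have hsv : fsupp v = Tᶜ := fsupp_indicator Tᶜ
      have hwv : wt v = w := by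
        show (fsupp v).card = w
        rw [hsv, Finset.card_compl, Fintype.card_fin, hT]
        omega
      obtain ⟨s, ⟨hsS, hsf⟩, huniq⟩ := hcov v hwv
      refine ⟨(fsupp s)ᶜ, ⟨⟨s, hsS, rfl⟩, ?_⟩, ?_⟩
      · have := (subface_iff v s).1 hsf
        rw [hsv] at this
        intro i hi
        simp only [Finset.mem_compl]
        intro hmem
        have : i ∈ Tᶜ := this hmem
        simp_all
      · rintro b ⟨⟨s', hs'S, rfl⟩, hTb⟩
        have hsub : fsupp s' ⊆ fsupp v := by
          rw [hsv]
          intro i hi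
          simp only [Finset.mem_compl]
          intro hiT
          exact (Finset.mem_compl.1 (hTb hiT)) hi
        have := huniq s' ⟨hs'S, (subface_iff v s').2 hsub⟩
        rw [this]
        rfl
  · rintro ⟨hcard, hcov⟩
    constructor
    · intro s hs
      have : (fsupp s)ᶜ.card = n - t := hcard _ ⟨s, hs, rfl⟩
      rw [card_compl_fsupp] at this
      have := wt_le s
      omega
    · intro v hv
      have hTcard : (fsupp v)ᶜ.card = n - w := by
        rw [card_compl_fsupp, hv]
      obtain ⟨b, ⟨⟨s, hsS, rfl⟩, hTb⟩, huniq⟩ := hcov _ hTcard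
      have key : ∀ s' : Fin n → Option (Fin 1), (fsupp v)ᶜ ⊆ (fsupp s')ᶜ ↔ SubFace v s' := by
        intro s'
        rw [subface_iff, Finset.compl_subset_compl]
      refine ⟨s, ⟨hsS, (key s).1 hTb⟩, ?_⟩
      rintro s' ⟨hs'S, hs'f⟩
      have := huniq (fsupp s')ᶜ ⟨⟨s', hs'S, rfl⟩, (key s').2 hs'f⟩
      exact eq_of_fsupp_eq (compl_injective this)
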